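/- Let κ ≤ 2^ℵ₀ be a cardinal. Then the following are equivalent: (a) for every index set I with |I| ≤ κ and every family (X_i)_{i∈I} of e-separable topological spaces, the product ∏_{i∈I} X_i is e-separable; (b) for every index set I with |I| ≤ κ and every family (X_i)_{i∈I} of discrete spaces, the product ∏_{i∈I} X_i is e-separable. -/

import Mathlib

open Cardinal Set

universe u

/-- A subset `D` of a topological space is closed discrete iff it is closed and
its subspace topology is discrete. -/
def ClosedDiscrete {X : Type u} [TopologicalSpace X] (D : Set X) : Prop :=
  IsClosed D ∧ DiscreteTopology D

/-- A space is `e`-separable iff it has a dense set which is a countable union of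
closed discrete sets. -/
def ESeparable (X : Type u) [TopologicalSpace X] : Prop :=
  ∃ D : ℕ → Set X, (∀ n, ClosedDiscrete (D n)) ∧ Dense (⋃ n, D n)

/-- The density of a space: the least cardinality of a dense subset. -/
noncomputable def density (X : Type u) [TopologicalSpace X] : Cardinal.{u} :=
  sInf {c | ∃ D : Set X, Dense D ∧ #D = c}

/-- The extent of a space: the supremum of the cardinalities of closed discrete subsets. -/
noncomputable def extent (X : Type u) [TopologicalSpace X] : Cardinal.{u} :=
  sSup {c | ∃ D : Set X, ClosedDiscrete D ∧ #D = c}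

/-- A set is closed discrete iff all of its subsets are closed. -/
lemma closedDiscrete_iff_subsets {X : Type*} [TopologicalSpace X] {D : Set X} :
    ClosedDiscrete D ↔ ∀ S : Set X, S ⊆ D → IsClosed S := by
  constructor
  · rintro ⟨hc, hd⟩ S hS
    have h1 : IsClosed ((↑) ⁻¹' S : Set D) := isClosed_discrete _
    have h2 := hc.isClosedEmbedding_subtypeVal.isClosedMap _ h1
    rwa [Subtype.image_preimage_coe, inter_eq_right.mpr hS] at h2
  · intro h
    refine ⟨h D le_rfl, discreteTopology_iff_forall_isClosed.mpr fun s => ?_⟩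
    have h1 : IsClosed (((↑) : D → X) '' s) :=
      h _ (by rintro x ⟨y, _, rfl⟩; exact y.2)
    have h2 : IsClosed (((↑) : D → X) ⁻¹' (((↑) : D → X) '' s)) :=
      h1.preimage continuous_subtype_val
    rwa [preimage_image_eq _ Subtype.val_injective] at h2

/-- A countable "dense" family of functions `ι → ℕ` exists when `ι` embeds into `ℕ → Bool`. -/
lemma exists_dense_family {ι : Type u} (e : ι → ℕ → Bool) (he : Function.Injective e) :
    ∃ σ : ℕ → ι → ℕ, ∀ (S : Finset ι) (p : ι → ℕ), ∃ k, ∀ i ∈ S, σ k i = p i := by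
  classical
  obtain ⟨g, hg⟩ := exists_surjective_nat (Σ n : ℕ, (Fin n → Bool) → ℕ)
  refine ⟨fun k i => (g k).2 (fun m => e i m), fun S p => ?_⟩
  set d : ι → ι → ℕ := fun i j =>
    if h : e i ≠ e j then Nat.find (Function.ne_iff.mp h) else 0 with hd
  set n : ℕ := ((S ×ˢ S).sup fun q => d q.1 q.2) + 1 with hn
  have hsep : ∀ i ∈ S, ∀ j ∈ S,
      (fun m : Fin n => e i m) = (fun m : Fin n => e j m) → i = j := by
    intro i hi j hj hmeq
    by_contra hcon
    have hene : e i ≠ e j := fun hh => hcon (he hh)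
    have h1 : e i (d i j) ≠ e j (d i j) := by
      simp only [hd, dif_pos hene]
      exact Nat.find_spec (Function.ne_iff.mp hene)
    have h2 : d i j < n :=
      Nat.lt_succ_of_le (Finset.le_sup (f := fun q : ι × ι => d q.1 q.2)
        (show ((i, j) : ι × ι) ∈ S ×ˢ S from Finset.mem_product.mpr ⟨hi, hj⟩))
    exact h1 (congrFun hmeq ⟨d i j, h2⟩)
  set v : (Fin n → Bool) → ℕ := fun t =>
    if h : ∃ i ∈ S, (fun m : Fin n => e i m) = t then p h.choose else 0 with hv
  obtain ⟨k, hk⟩ := hg ⟨n, v⟩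
  refine ⟨k, fun i hi => ?_⟩
  show (g k).2 (fun m : Fin (g k).1 => e i m) = p i
  rw [hk]
  show v (fun m : Fin n => e i m) = p i
  have hex : ∃ j ∈ S, (fun m : Fin n => e j m) = (fun m : Fin n => e i m) := ⟨i, hi, rfl⟩
  rw [hv]
  simp only [dif_pos hex]
  obtain ⟨hj1, hj2⟩ := hex.choose_spec
  rw [hsep _ hj1 _ hi hj2]

/-- Transfer e-separability of a product of closed subspaces to closed discrete
subsets of the ambient product. -/
lemma eSeparable_transfer {ι : Type u} {X : ι → Type u} [∀ i, TopologicalSpace (X i)]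
    {D : ∀ i, Set (X i)} (hcl : ∀ i, IsClosed (D i))
    (h : ESeparable (∀ i, D i)) :
    ∃ E : ℕ → Set (∀ i, X i), (∀ m, ClosedDiscrete (E m)) ∧
      ∀ U : Set (∀ i, X i), IsOpen U → (U ∩ Set.pi univ D).Nonempty →
        (U ∩ ⋃ m, E m).Nonempty := by
  classical
  obtain ⟨E, hE, hdense⟩ := h
  set G : (∀ i, D i) → ∀ i, X i := fun f i => (f i : X i) with hG
  have hind : Topology.IsInducing G := by
    constructor
    rw [induced_to_pi]
    simp only [Pi.topologicalSpace, instTopologicalSpaceSubtype, induced_compose]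
    rfl
  have hinj : Function.Injective G := fun f g hfg =>
    funext fun i => Subtype.ext (congrFun hfg i)
  have hrange : IsClosed (Set.range G) := by
    have hr : Set.range G = Set.pi univ D := by
      ext g
      constructor
      · rintro ⟨f, rfl⟩ i _
        exact (f i).2
      · intro hgmem
        exact ⟨fun i => ⟨g i, hgmem i (mem_univ i)⟩, rfl⟩
    rw [hr]
    exact isClosed_set_pi fun i _ => hcl i
  have hcemb : Topology.IsClosedEmbedding G := ⟨⟨hind, hinj⟩, hrange⟩
  refine ⟨fun m => G '' E m, fun m => ?_, fun U hU hUD => ?_⟩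
  · rw [closedDiscrete_iff_subsets]
    intro T hT
    have h1 : IsClosed (G ⁻¹' T ∩ E m) :=
      (closedDiscrete_iff_subsets.mp (hE m)) _ inter_subset_right
    have h2 : G '' (G ⁻¹' T ∩ E m) = T := by
      apply Subset.antisymm
      · rintro x ⟨y, ⟨hy1, _⟩, rfl⟩
        exact hy1
      · intro x hx
        obtain ⟨y, hy, heq⟩ := hT hx
        exact ⟨y, ⟨by rw [mem_preimage, heq]; exact hx, hy⟩, heq⟩
    rw [← h2]
    exact hcemb.isClosedMap _ h1
  · obtain ⟨x, hxU, hxD⟩ := hUD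
    have hpre : (G ⁻¹' U).Nonempty := by
      refine ⟨fun i => ⟨x i, hxD i (mem_univ i)⟩, ?_⟩
      show G _ ∈ U
      convert hxU
    obtain ⟨f, hfU, hfE⟩ :=
      hdense.inter_open_nonempty (G ⁻¹' U) (hU.preimage hcemb.continuous) hpre
    obtain ⟨m, hfm⟩ := mem_iUnion.mp hfE
    exact ⟨G f, hfU, mem_iUnion.mpr ⟨m, mem_image_of_mem G hfm⟩⟩

/-- For `κ ≤ 𝔠`: every product of at most `κ` many `e`-separable spaces is
`e`-separable iff every product of at most `κ` many discrete spaces is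
`e`-separable. -/
theorem eSeparable_products_iff_discrete_products (κ : Cardinal.{u}) (hκ : κ ≤ 2 ^ ℵ₀) :
    (∀ (ι : Type u) (X : ι → Type u) [∀ i, TopologicalSpace (X i)] [∀ i, T1Space (X i)],
        #ι ≤ κ → (∀ i, ESeparable (X i)) → ESeparable (∀ i, X i)) ↔
    (∀ (ι : Type u) (X : ι → Type u) [∀ i, TopologicalSpace (X i)] [∀ i, DiscreteTopology (X i)],
        #ι ≤ κ → ESeparable (∀ i, X i)) := by
  classical
  constructor
  · intro ha ι X _ _ hι
    refine ha ι X hι fun i => ⟨fun _ => univ, fun n => ⟨isClosed_univ, inferInstance⟩, ?_⟩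
    rw [iUnion_const]
    exact dense_univ
  · intro hb ι X _ _ hι hES
    by_cases hne : ∀ i, Nonempty (X i)
    · -- every factor nonempty
      choose D hDcd hDdense using hES
      have hnonempty : ∀ i, ∃ n, (D i n).Nonempty := by
        intro i
        obtain ⟨x⟩ := hne i
        obtain ⟨y, -, hy⟩ :=
          (hDdense i).inter_open_nonempty univ isOpen_univ ⟨x, trivial⟩
        obtain ⟨n, hn⟩ := mem_iUnion.mp hy
        exact ⟨n, y, hn⟩
      choose m hm using hnonempty
      set D' : ∀ i, ℕ → Set (X i) :=
        fun i n => if (D i n).Nonempty then D i n else D i (m i) with hD'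
      have hD'cd : ∀ i n, ClosedDiscrete (D' i n) := by
        intro i n
        simp only [hD']
        split_ifs with h
        · exact hDcd i n
        · exact hDcd i (m i)
      have hD'ne : ∀ i n, (D' i n).Nonempty := by
        intro i n
        simp only [hD']
        split_ifs with h
        · exact h
        · exact hm i
      have hD'mem : ∀ i n x, x ∈ D i n → x ∈ D' i n := by
        intro i n x hx
        simp only [hD']
        rw [if_pos ⟨x, hx⟩]
        exact hx
      -- an injection of ι into ℕ → Bool
      have hcard : Cardinal.lift.{0} #ι ≤ Cardinal.lift.{u} #(ℕ → Bool) := by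
        rw [Cardinal.lift_uzero]
        refine hι.trans (hκ.trans_eq ?_)
        rw [← Cardinal.power_def, Cardinal.mk_bool, Cardinal.mk_nat, Cardinal.lift_power]
        simp
      obtain ⟨e⟩ : Nonempty (ι ↪ (ℕ → Bool)) := Cardinal.lift_mk_le'.mp hcard
      obtain ⟨σ, hσ⟩ := exists_dense_family e e.injective
      have hk : ∀ k, ∃ E : ℕ → Set (∀ i, X i), (∀ m, ClosedDiscrete (E m)) ∧
          ∀ U : Set (∀ i, X i), IsOpen U →
            (U ∩ Set.pi univ (fun i => D' i (σ k i))).Nonempty →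
            (U ∩ ⋃ m, E m).Nonempty := by
        intro k
        haveI hdisc : ∀ i, DiscreteTopology (D' i (σ k i)) := fun i => (hD'cd i (σ k i)).2
        exact eSeparable_transfer (fun i => (hD'cd i (σ k i)).1)
          (hb ι (fun i => ↥(D' i (σ k i))) hι)
      choose E hEcd hEdense using hk
      refine ⟨fun n => E n.unpair.1 n.unpair.2, fun n => hEcd _ _, ?_⟩
      rw [dense_iff_inter_open]
      intro U hU hUne
      obtain ⟨x, hx⟩ := hUne
      obtain ⟨S, u, hu, hsub⟩ := isOpen_pi_iff.mp hU x hx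
      have hpick : ∀ i, ∃ (nn : ℕ) (y : X i), i ∈ S → y ∈ D i nn ∧ y ∈ u i := by
        intro i
        by_cases hi : i ∈ S
        · obtain ⟨y, hy1, hy2⟩ :=
            (hDdense i).inter_open_nonempty (u i) (hu i hi).1 ⟨x i, (hu i hi).2⟩
          obtain ⟨nn, hnn⟩ := mem_iUnion.mp hy2
          exact ⟨nn, y, fun _ => ⟨hnn, hy1⟩⟩
        · exact ⟨0, (hne i).some, fun h => absurd h hi⟩
      choose nn y hny using hpick
      obtain ⟨k, hkk⟩ := hσ S nn
      set z : ∀ i, X i := fun i => if h : i ∈ S then y i else (hD'ne i (σ k i)).some with hz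
      have hzpi : z ∈ Set.pi univ (fun i => D' i (σ k i)) := by
        intro i _
        simp only [hz]
        split_ifs with h
        · rw [hkk i h]
          exact hD'mem i (nn i) (y i) ((hny i h).1)
        · exact (hD'ne i (σ k i)).some_mem
      have hzU : z ∈ U := by
        refine hsub fun i hi => ?_
        simp only [hz]
        split_ifs with h
        · exact (hny i h).2
        · exact absurd (Finset.mem_coe.mp hi) h
      obtain ⟨w, hwU, hwE⟩ := hEdense k U hU ⟨z, hzU, hzpi⟩
      obtain ⟨mm, hmm⟩ := mem_iUnion.mp hwE
      refine ⟨w, hwU, mem_iUnion.mpr ⟨Nat.pair k mm, ?_⟩⟩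
      simpa [Nat.unpair_pair] using hmm
    · -- some factor is empty
      push_neg at hne
      obtain ⟨i0, hi0⟩ := hne
      have hempty : IsEmpty (∀ i, X i) := ⟨fun f => hi0.false (f i0)⟩
      refine ⟨fun _ => ∅, fun n => ⟨isClosed_empty, ?_⟩, fun x => isEmptyElim x⟩
      refine discreteTopology_iff_forall_isClosed.mpr fun s => ?_
      rw [Set.eq_empty_of_isEmpty s]
      exact isClosed_empty
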